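/- For every t < 0 and θ ∈ ℝ, the curvature of the Angenent oval equals √(cos²θ + a(t)²); explicitly, writing x' = ∂_θ x, y' = ∂_θ y, x'' = ∂²_θ x, y'' = ∂²_θ y, one has (x'(θ,t)·y''(θ,t) − y'(θ,t)·x''(θ,t)) / (x'(θ,t)² + y'(θ,t)²)^{3/2} = √(cos²θ + a(t)²). -/

import Mathlib

open Real

/-- `a(t) := (e^{-2t} - 1)^{-1/2}` for the Angenent oval. -/
noncomputable def angenentA (t : ℝ) : ℝ := Real.sqrt ((Real.exp (-2 * t) - 1)⁻¹)

/-- The `x`-coordinate of the Angenent oval in the turning angle parametrization. -/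
noncomputable def angenentX (θ t : ℝ) : ℝ :=
  Real.arctan (Real.sin θ / Real.sqrt (Real.cos θ ^ 2 + angenentA t ^ 2))

/-- The `y`-coordinate of the Angenent oval in the turning angle parametrization. -/
noncomputable def angenentY (θ t : ℝ) : ℝ :=
  -t + Real.log ((Real.sqrt (Real.cos θ ^ 2 + angenentA t ^ 2) - Real.cos θ) /
    Real.sqrt (angenentA t ^ 2 + 1))

/-- Auxiliary: `w(s) = √(cos²s + A)`. -/
noncomputable def wA (A s : ℝ) : ℝ := Real.sqrt (Real.cos s ^ 2 + A)

lemma w_pos {A : ℝ} (hA : 0 < A) (s : ℝ) : 0 < wA A s :=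
  Real.sqrt_pos.2 (by positivity)

lemma w_sq {A : ℝ} (hA : 0 < A) (s : ℝ) : wA A s ^ 2 = Real.cos s ^ 2 + A :=
  Real.sq_sqrt (by positivity)

lemma cos_lt_w {A : ℝ} (hA : 0 < A) (s : ℝ) : Real.cos s < wA A s := by
  calc Real.cos s ≤ |Real.cos s| := le_abs_self _
    _ = Real.sqrt (Real.cos s ^ 2) := (Real.sqrt_sq_eq_abs _).symm
    _ < wA A s := Real.sqrt_lt_sqrt (sq_nonneg _) (by linarith)

lemma hasDerivAt_w {A : ℝ} (hA : 0 < A) (s : ℝ) :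
    HasDerivAt (wA A) (-(Real.sin s * Real.cos s) / wA A s) s := by
  have h1 : HasDerivAt (fun s => Real.cos s ^ 2 + A) (2 * Real.cos s * (-Real.sin s)) s := by
    simpa using (((Real.hasDerivAt_cos s).pow 2).add_const A)
  have h2 := h1.sqrt (by positivity)
  have hw := (w_pos hA s).ne'
  convert h2 using 1
  unfold wA at *
  field_simp
  unfold wA
  ring

lemma hasDerivAt_X {A : ℝ} (hA : 0 < A) (s : ℝ) :
    HasDerivAt (fun s => Real.arctan (Real.sin s / wA A s)) (Real.cos s / wA A s) s := by
  have hw := w_pos hA s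
  have hq := (Real.hasDerivAt_sin s).div (hasDerivAt_w hA s) hw.ne'
  have h := hq.arctan
  refine h.congr_deriv ?_
  simp only [Pi.div_apply]
  have hsq := w_sq hA s
  have pyth := Real.sin_sq_add_cos_sq s
  set W := wA A s with hW
  field_simp
  nlinarith [hsq, pyth, sq_nonneg W, hw]

lemma hasDerivAt_Y {A : ℝ} (hA : 0 < A) (t s : ℝ) :
    HasDerivAt (fun s => -t + Real.log ((wA A s - Real.cos s) / Real.sqrt (A + 1)))
      (Real.sin s / wA A s) s := by
  have hw := w_pos hA s
  have hnum : 0 < wA A s - Real.cos s := by linarith [cos_lt_w hA s]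
  have hK : (0:ℝ) < Real.sqrt (A + 1) := Real.sqrt_pos.2 (by linarith)
  have hf : HasDerivAt (fun s => (wA A s - Real.cos s) / Real.sqrt (A + 1))
      ((-(Real.sin s * Real.cos s) / wA A s - -Real.sin s) / Real.sqrt (A + 1)) s :=
    ((hasDerivAt_w hA s).sub (Real.hasDerivAt_cos s)).div_const _
  have hlog := hf.log (by positivity)
  have h := hlog.const_add (-t)
  refine h.congr_deriv ?_
  set W := wA A s
  field_simp
  ring

lemma hasDerivAt_X' {A : ℝ} (hA : 0 < A) (s : ℝ) :
    HasDerivAt (fun s => Real.cos s / wA A s) (-(Real.sin s * A) / wA A s ^ 3) s := by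
  have hw := w_pos hA s
  have h := (Real.hasDerivAt_cos s).div (hasDerivAt_w hA s) hw.ne'
  refine h.congr_deriv ?_
  have hsq := w_sq hA s
  set W := wA A s
  field_simp
  linear_combination (-Real.sin s) * hsq

lemma hasDerivAt_Y' {A : ℝ} (hA : 0 < A) (s : ℝ) :
    HasDerivAt (fun s => Real.sin s / wA A s) (Real.cos s * (1 + A) / wA A s ^ 3) s := by
  have hw := w_pos hA s
  have h := (Real.hasDerivAt_sin s).div (hasDerivAt_w hA s) hw.ne'
  refine h.congr_deriv ?_
  have hsq := w_sq hA s
  have pyth := Real.sin_sq_add_cos_sq s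
  set W := wA A s
  field_simp
  linear_combination Real.cos s * hsq + Real.cos s * pyth

/-- The curvature of the Angenent oval equals `√(cos²θ + a(t)²)`: with `x' = ∂_θ x`,
`y' = ∂_θ y`, `x'' = ∂²_θ x`, `y'' = ∂²_θ y`, one has
`(x'·y'' − y'·x'') / (x'² + y'²)^{3/2} = √(cos²θ + a(t)²)`. -/
theorem angenent_curvature (t θ : ℝ) (ht : t < 0) :
    (deriv (fun s => angenentX s t) θ * deriv (deriv (fun s => angenentY s t)) θ -
        deriv (fun s => angenentY s t) θ * deriv (deriv (fun s => angenentX s t)) θ) /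
      ((deriv (fun s => angenentX s t) θ ^ 2 + deriv (fun s => angenentY s t) θ ^ 2) ^
        ((3 : ℝ) / 2)) =
      Real.sqrt (Real.cos θ ^ 2 + angenentA t ^ 2) := by
  have hexp : (1:ℝ) < Real.exp (-2 * t) := by
    calc (1:ℝ) = Real.exp 0 := Real.exp_zero.symm
      _ < Real.exp (-2 * t) := Real.exp_lt_exp.2 (by linarith)
  have hA2 : angenentA t ^ 2 = (Real.exp (-2 * t) - 1)⁻¹ :=
    Real.sq_sqrt (inv_nonneg.2 (by linarith))
  set A := angenentA t ^ 2 with hAdef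
  have hA : 0 < A := by rw [hA2]; exact inv_pos.2 (by linarith)
  have hxdef : (fun s => angenentX s t) = fun s => Real.arctan (Real.sin s / wA A s) := rfl
  have hydef : (fun s => angenentY s t) =
      fun s => -t + Real.log ((wA A s - Real.cos s) / Real.sqrt (A + 1)) := rfl
  have hDX : deriv (fun s => angenentX s t) = fun s => Real.cos s / wA A s := by
    rw [hxdef]; exact funext fun s => (hasDerivAt_X hA s).deriv
  have hDY : deriv (fun s => angenentY s t) = fun s => Real.sin s / wA A s := by
    rw [hydef]; exact funext fun s => (hasDerivAt_Y hA t s).deriv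
  rw [hDX, hDY]
  rw [(hasDerivAt_X' hA θ).deriv, (hasDerivAt_Y' hA θ).deriv]
  have hw := w_pos hA θ
  have hsq := w_sq hA θ
  have pyth := Real.sin_sq_add_cos_sq θ
  have hRHS : Real.sqrt (Real.cos θ ^ 2 + angenentA t ^ 2) = wA A θ := rfl
  rw [hRHS]
  set W := wA A θ with hWdef
  have hbase : (Real.cos θ / W) ^ 2 + (Real.sin θ / W) ^ 2 = (1 / W) ^ 2 := by
    field_simp
    linear_combination pyth
  rw [hbase]
  have hpow : ((1 / W) ^ 2 : ℝ) ^ ((3:ℝ)/2) = (1/W) ^ (3:ℕ) := by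
    rw [← Real.rpow_natCast (1/W) 2, ← Real.rpow_mul (by positivity),
      show (((2:ℕ):ℝ) * ((3:ℝ)/2)) = ((3:ℕ):ℝ) by norm_num, Real.rpow_natCast]
  rw [hpow]
  field_simp
  rw [div_eq_iff hw.ne']
  linear_combination A * pyth - hsq
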